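/- The preference P_h : xz ≻ x ≻ z' ≻ z ≻ ∅, where x_D ≠ z_D = z'_D and feasible sets contain at most one contract per doctor, is bilaterally substitutable but not pseudo-substitutable: no sub-preference of P_h is substitutable. -/

import Mathlib

inductive Ctr | x | z | z'
  deriving DecidableEq

open Ctr

/-- Doctors: `x_D ≠ z_D = z'_D`. -/
instance : Fintype Ctr := ⟨{Ctr.x, Ctr.z, Ctr.z'}, by intro a; cases a <;> decide⟩

def doc : Ctr → Fin 2
  | x => 0
  | z => 1
  | z' => 1

/-- Choice function of `P_h : xz ≻ x ≻ z' ≻ z ≻ ∅` (on any input it selects the best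
feasible subset, feasible sets having at most one contract per doctor). -/
def CP (S : Finset Ctr) : Finset Ctr :=
  if x ∈ S ∧ z ∈ S then {x, z}
  else if x ∈ S then {x}
  else if z' ∈ S then {z'}
  else if z ∈ S then {z}
  else ∅

def Substitutable (C : Finset Ctr → Finset Ctr) : Prop :=
  ∀ (S : Finset Ctr) (w w' : Ctr), w ∈ S → w' ∈ S → w ≠ w' → w' ∈ C S → w' ∈ C (S.erase w)

def Consistent (C : Finset Ctr → Finset Ctr) : Prop :=
  ∀ S T : Finset Ctr, C S ⊆ T → T ⊆ S → C T = C S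

def SubPref (C' C : Finset Ctr → Finset Ctr) : Prop :=
  (∀ S : Finset Ctr, C' S = S → C S = S) ∧
  (∀ (S : Finset Ctr) (w : Ctr), C' S = S → w ∉ S → w ∈ C (insert w S) → w ∈ C' (insert w S))

def BilateralSubstitutable (C : Finset Ctr → Finset Ctr) : Prop :=
  ¬ ∃ (w c : Ctr) (Y : Finset Ctr),
      doc w ∉ Y.image doc ∧ doc c ∉ Y.image doc ∧
      c ∉ C (insert c Y) ∧ c ∈ C (insert c (insert w Y))

/-- `P_h : xz ≻ x ≻ z' ≻ z ≻ ∅` is bilaterally substitutable but not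
pseudo-substitutable: no (preference-induced, hence consistent) sub-preference of
`P_h` is substitutable. -/
theorem CP_bilateral_not_pseudo :
    BilateralSubstitutable CP ∧
    ∀ Q : Finset Ctr → Finset Ctr,
      (∀ S : Finset Ctr, Q S ⊆ S) → Consistent Q → SubPref Q CP →
      ¬ Substitutable Q := by
  constructor
  · unfold BilateralSubstitutable; decide
  · intro Q hsub hcons ⟨h1, h2⟩ hS
    -- Q ∅ = ∅
    have hQ0 : Q ∅ = ∅ := Finset.subset_empty.mp (hsub ∅)
    -- singletons are fixed points of Q
    have hone : ∀ w : Ctr, w ∈ CP {w} → Q {w} = {w} := by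
      intro w hw
      have h := h2 ∅ w hQ0 (by simp) (by simpa using hw)
      simp only [LawfulSingleton.insert_empty_eq] at h
      exact Finset.Subset.antisymm (hsub _) (Finset.singleton_subset_iff.mpr h)
    have hx : Q {x} = {x} := hone x (by decide)
    have hz : Q {z} = {z} := hone z (by decide)
    have hz' : Q {z'} = {z'} := hone z' (by decide)
    -- x ∈ Q {x, z'}
    have hxz'1 : Ctr.x ∈ Q {x, z'} := by
      have h := h2 {z'} x hz' (by decide) (by decide)
      have e : (insert x {z'} : Finset Ctr) = {x, z'} := by decide
      rwa [e] at h
    -- z' ∉ Q {x, z'}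
    have hxz'2 : Ctr.z' ∉ Q {x, z'} := by
      intro hmem
      have heq : Q {x, z'} = {x, z'} := by
        refine Finset.Subset.antisymm (hsub _) ?_
        intro a ha
        simp only [Finset.mem_insert, Finset.mem_singleton] at ha
        rcases ha with rfl | rfl
        · exact hxz'1
        · exact hmem
      have := h1 _ heq
      exact absurd this (by decide)
    -- z' ∈ Q {z, z'}
    have hzz'1 : Ctr.z' ∈ Q {z, z'} := by
      have h := h2 {z} z' hz (by decide) (by decide)
      have e : (insert z' {z} : Finset Ctr) = {z, z'} := by decide
      rwa [e] at h
    -- z ∉ Q {z, z'}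
    have hzz'2 : Ctr.z ∉ Q {z, z'} := by
      intro hmem
      have heq : Q {z, z'} = {z, z'} := by
        refine Finset.Subset.antisymm (hsub _) ?_
        intro a ha
        simp only [Finset.mem_insert, Finset.mem_singleton] at ha
        rcases ha with rfl | rfl
        · exact hmem
        · exact hzz'1
      have := h1 _ heq
      exact absurd this (by decide)
    -- Q {x, z} = {x, z}
    have hxz : Q {x, z} = {x, z} := by
      have ha : Ctr.z ∈ Q {x, z} := by
        have h := h2 {x} z hx (by decide) (by decide)
        have e : (insert z {x} : Finset Ctr) = {x, z} := by decide
        rwa [e] at h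
      have hb : Ctr.x ∈ Q {x, z} := by
        have h := h2 {z} x hz (by decide) (by decide)
        have e : (insert x {z} : Finset Ctr) = {x, z} := by decide
        rwa [e] at h
      refine Finset.Subset.antisymm (hsub _) ?_
      intro a haa
      simp only [Finset.mem_insert, Finset.mem_singleton] at haa
      rcases haa with rfl | rfl
      · exact hb
      · exact ha
    -- z' ∉ Q {x, z, z'}
    have h8 : Ctr.z' ∉ Q {x, z, z'} := by
      intro hmem
      have h := hS {x, z, z'} z z' (by decide) (by decide) (by decide) hmem
      have e : ({x, z, z'} : Finset Ctr).erase z = {x, z'} := by decide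
      rw [e] at h
      exact hxz'2 h
    -- Q {x, z} = Q {x, z, z'}
    have h9 : Q {x, z} = Q {x, z, z'} := by
      refine hcons {x, z, z'} {x, z} ?_ (by decide)
      intro a ha
      have haS := hsub _ ha
      simp only [Finset.mem_insert, Finset.mem_singleton] at haS ⊢
      rcases haS with rfl | rfl | rfl
      · exact Or.inl rfl
      · exact Or.inr rfl
      · exact absurd ha h8
    have h10 : Ctr.z ∈ Q {x, z, z'} := by
      rw [← h9, hxz]; decide
    have h11 := hS {x, z, z'} x z (by decide) (by decide) (by decide) h10
    have e : ({x, z, z'} : Finset Ctr).erase x = {z, z'} := by decide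
    rw [e] at h11
    exact hzz'2 h11
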